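/- Let 𝐋 be a symmetric positive semidefinite d×d matrix, f : ℝ^d → ℝ differentiable, μ > 0, and x* ∈ ℝ^d a point such that μ ‖x − x*‖²_𝐋 + ‖∇f(x)‖² ≤ 2 ⟨∇f(x), x − x*⟩_𝐋 for all x ∈ ℝ^d, where ⟨u, v⟩_𝐋 = uᵀ 𝐋 v and ‖u‖²_𝐋 = uᵀ 𝐋 u. Let S be a proper sampling with sketch C, and let γ satisfy 0 < γ ≤ 1/λmax(P̄ ∘ 𝐋) and γμ ≤ 1. Define random iterates by a fixed x^0 and x^{k+1} = x^k − γ C_k ∇f(x^k) with C_0, C_1, … independent copies of C. Then for every k ≥ 0, E[‖x^k − x*‖²_𝐋] ≤ (1 − γμ)^k ‖x^0 − x*‖²_𝐋. -/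

import Mathlib

open scoped BigOperators RealInnerProductSpace
open Matrix

noncomputable section

/-- A proper sampling on `{1,…,d}`: a finitely supported probability distribution over
subsets of `Fin d` whose marginal probabilities are all positive. -/
structure Sampling (d : ℕ) where
  prob : Finset (Fin d) → ℝ
  nonneg : ∀ S, 0 ≤ prob S
  total : ∑ S : Finset (Fin d), prob S = 1
  margPos : ∀ j : Fin d, 0 < ∑ S : Finset (Fin d), if j ∈ S then prob S else 0

namespace Sampling

variable {d : ℕ} (μ : Sampling d)

/-- Marginal probability `p_j = Prob(j ∈ S)`. -/
def marg (j : Fin d) : ℝ := ∑ S : Finset (Fin d), if j ∈ S then μ.prob S else 0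

/-- Probability matrix `P`, with entries `p_{jl} = Prob({j,l} ⊆ S)`. -/
def probMatrix : Matrix (Fin d) (Fin d) ℝ :=
  Matrix.of fun j l => ∑ S : Finset (Fin d), if j ∈ S ∧ l ∈ S then μ.prob S else 0

/-- The matrix `P̄` with entries `p_{jl}/(p_j p_l)`. -/
def Pbar : Matrix (Fin d) (Fin d) ℝ :=
  Matrix.of fun j l => μ.probMatrix j l / (μ.marg j * μ.marg l)

/-- The matrix `P̃ = P̄ − E` where `E` is the all-ones matrix. -/
def Ptilde : Matrix (Fin d) (Fin d) ℝ := μ.Pbar - Matrix.of fun _ _ => (1 : ℝ)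

/-- The unbiased diagonal sketch `C` associated with a realization `S` of the sampling. -/
def sketch (S : Finset (Fin d)) : Matrix (Fin d) (Fin d) ℝ :=
  Matrix.diagonal fun j => if j ∈ S then (μ.marg j)⁻¹ else 0

end Sampling

/-- Largest eigenvalue of a symmetric matrix, via the Rayleigh quotient. -/
def lambdaMax {d : ℕ} (M : Matrix (Fin d) (Fin d) ℝ) : ℝ :=
  sSup {r : ℝ | ∃ v : Fin d → ℝ, v ⬝ᵥ v = 1 ∧ r = v ⬝ᵥ M.mulVec v}

/-- Smallest eigenvalue of a symmetric matrix, via the Rayleigh quotient. -/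
def lambdaMin {d : ℕ} (M : Matrix (Fin d) (Fin d) ℝ) : ℝ :=
  sInf {r : ℝ | ∃ v : Fin d → ℝ, v ⬝ᵥ v = 1 ∧ r = v ⬝ᵥ M.mulVec v}

/-- `Mdag` is the Moore–Penrose pseudoinverse of `M`. -/
def IsMoorePenrose {m n : Type*} [Fintype m] [Fintype n]
    (M : Matrix m n ℝ) (Mdag : Matrix n m ℝ) : Prop :=
  M * Mdag * M = M ∧ Mdag * M * Mdag = Mdag ∧
    (M * Mdag)ᵀ = M * Mdag ∧ (Mdag * M)ᵀ = Mdag * M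

/-- Vectors in `ℝ^d` with the Euclidean inner product. -/
abbrev Vec (d : ℕ) := EuclideanSpace ℝ (Fin d)

/-- Action of a matrix on a Euclidean vector. -/
def mact {d e : ℕ} (M : Matrix (Fin e) (Fin d) ℝ) (x : Vec d) : Vec e :=
  Matrix.toEuclideanLin M x

/-- Quadratic form `xᵀ M x`, i.e. the squared `M`-seminorm `‖x‖²_M`. -/
def quad {d : ℕ} (M : Matrix (Fin d) (Fin d) ℝ) (x : Vec d) : ℝ := ⟪x, mact M x⟫

/-- `f` is `M`-smooth: `f x ≤ f y + ⟨∇f(y), x−y⟩ + ½ (x−y)ᵀ M (x−y)` for all `x, y`. -/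
def MSmooth {d : ℕ} (f : Vec d → ℝ) (M : Matrix (Fin d) (Fin d) ℝ) : Prop :=
  ∀ x y : Vec d, f x ≤ f y + ⟪gradient f y, x - y⟫ + (1 / 2) * quad M (x - y)

/-- Random iterates driven by i.i.d. draws: `traj x0 step k ω` is the `k`-th iterate along
the sample path `ω` of `k` draws. -/
def traj {V Ω : Type*} (x0 : V) (step : V → Ω → V) : ∀ k : ℕ, (Fin k → Ω) → V
  | 0, _ => x0
  | k + 1, ω => step (traj x0 step k fun i => ω i.castSucc) (ω (Fin.last k))

/-- Expectation `E[φ(x^k)]` of a functional of the `k`-th iterate, over `k` i.i.d. draws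
with one-step distribution `P`. -/
def trajExp {V Ω : Type*} [Fintype Ω] (P : Ω → ℝ) (x0 : V) (step : V → Ω → V)
    (φ : V → ℝ) (k : ℕ) : ℝ :=
  ∑ ω : Fin k → Ω, (∏ i, P (ω i)) * φ (traj x0 step k ω)


section AuxStatement6

variable {d : ℕ}

lemma mact_apply' (M : Matrix (Fin d) (Fin d) ℝ) (x : Vec d) (i : Fin d) :
    mact M x i = M.mulVec x i := rfl

lemma quad_eq_dot' (M : Matrix (Fin d) (Fin d) ℝ) (z : Vec d) :
    quad M z = (fun i => z i) ⬝ᵥ M *ᵥ (fun i => z i) := by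
  simp [quad, PiLp.inner_apply, dotProduct, mact_apply', mul_comm]

lemma dot_self_nonneg' (v : Fin d → ℝ) : 0 ≤ v ⬝ᵥ v :=
  Finset.sum_nonneg fun i _ => mul_self_nonneg _

lemma rayleigh_le' (M : Matrix (Fin d) (Fin d) ℝ) (g : Fin d → ℝ) :
    g ⬝ᵥ M *ᵥ g ≤ lambdaMax M * (g ⬝ᵥ g) := by
  rcases eq_or_ne g 0 with rfl | hg
  · simp [lambdaMax]
  · have ht : 0 < g ⬝ᵥ g := by
      rcases (dot_self_nonneg' g).lt_or_eq with h | h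
      · exact h
      · exfalso; apply hg
        funext i
        show g i = 0
        have h0 : ∀ j ∈ Finset.univ, 0 ≤ g j * g j := fun j _ => mul_self_nonneg _
        have := (Finset.sum_eq_zero_iff_of_nonneg h0).mp h.symm i (Finset.mem_univ i)
        nlinarith [this]
    set t := g ⬝ᵥ g with ht'
    have hsq : Real.sqrt t * Real.sqrt t = t := Real.mul_self_sqrt ht.le
    have hsqpos : 0 < Real.sqrt t := Real.sqrt_pos.mpr ht
    set v : Fin d → ℝ := (Real.sqrt t)⁻¹ • g with hv
    have hv1 : v ⬝ᵥ v = 1 := by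
      rw [hv, smul_dotProduct, dotProduct_smul, smul_eq_mul, smul_eq_mul, ← mul_assoc,
        ← mul_inv, hsq]
      exact inv_mul_cancel₀ ht.ne'
    have hvM : v ⬝ᵥ M *ᵥ v = t⁻¹ * (g ⬝ᵥ M *ᵥ g) := by
      rw [hv, smul_dotProduct, Matrix.mulVec_smul, dotProduct_smul, smul_eq_mul, smul_eq_mul,
        ← mul_assoc, ← mul_inv, hsq]
    have hmem : v ⬝ᵥ M *ᵥ v ∈ {r : ℝ | ∃ v : Fin d → ℝ, v ⬝ᵥ v = 1 ∧ r = v ⬝ᵥ M.mulVec v} :=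
      ⟨v, hv1, rfl⟩
    have hbdd : BddAbove {r : ℝ | ∃ v : Fin d → ℝ, v ⬝ᵥ v = 1 ∧ r = v ⬝ᵥ M.mulVec v} := by
      have hcont : Continuous fun v : Fin d → ℝ => v ⬝ᵥ M *ᵥ v := by
        simp only [dotProduct, Matrix.mulVec]
        exact continuous_finset_sum _ fun i _ =>
          (continuous_apply i).mul (continuous_finset_sum _ fun j _ =>
            (continuous_const.mul (continuous_apply j)))
      have hcl : IsClosed {v : Fin d → ℝ | v ⬝ᵥ v = 1} := by
        have : Continuous fun v : Fin d → ℝ => v ⬝ᵥ v := by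
          simp only [dotProduct]
          exact continuous_finset_sum _ fun i _ => (continuous_apply i).mul (continuous_apply i)
        exact isClosed_eq this continuous_const
      have hbd : Bornology.IsBounded {v : Fin d → ℝ | v ⬝ᵥ v = 1} := by
        apply isBounded_iff_forall_norm_le.mpr
        refine ⟨1, fun v hv => ?_⟩
        rw [pi_norm_le_iff_of_nonneg zero_le_one]
        intro i
        rw [Real.norm_eq_abs, abs_le_one_iff_mul_self_le_one]
        calc v i * v i ≤ ∑ j, v j * v j :=
              Finset.single_le_sum (fun j _ => mul_self_nonneg (v j)) (Finset.mem_univ i)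
          _ = 1 := hv
      have hcpt : IsCompact {v : Fin d → ℝ | v ⬝ᵥ v = 1} :=
        Metric.isCompact_of_isClosed_isBounded hcl hbd
      have himg : {r : ℝ | ∃ v : Fin d → ℝ, v ⬝ᵥ v = 1 ∧ r = v ⬝ᵥ M.mulVec v}
          = (fun v : Fin d → ℝ => v ⬝ᵥ M *ᵥ v) '' {v | v ⬝ᵥ v = 1} := by
        ext r; simp [eq_comm, Set.mem_image, and_comm]
      rw [himg]
      exact (hcpt.image hcont).bddAbove
    have hle : v ⬝ᵥ M *ᵥ v ≤ lambdaMax M := le_csSup hbdd hmem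
    rw [hvM] at hle
    calc g ⬝ᵥ M *ᵥ g = (t⁻¹ * (g ⬝ᵥ M *ᵥ g)) * t := by field_simp
      _ ≤ lambdaMax M * t := mul_le_mul_of_nonneg_right hle ht.le

lemma exp_unbiased' (μs : Sampling d) (g w : Fin d → ℝ) :
    ∑ S : Finset (Fin d), μs.prob S * ((μs.sketch S *ᵥ g) ⬝ᵥ w) = g ⬝ᵥ w := by
  have h : ∀ S : Finset (Fin d), μs.prob S * ((μs.sketch S *ᵥ g) ⬝ᵥ w)
      = ∑ j, (if j ∈ S then μs.prob S else 0) * ((μs.marg j)⁻¹ * (g j * w j)) := by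
    intro S
    simp only [Sampling.sketch, Matrix.mulVec_diagonal, dotProduct, Finset.mul_sum]
    refine Finset.sum_congr rfl fun j _ => ?_
    split_ifs <;> ring
  rw [Finset.sum_congr rfl fun S _ => h S, Finset.sum_comm]
  simp only [← Finset.sum_mul]
  have hm : ∀ j : Fin d, (∑ S : Finset (Fin d), if j ∈ S then μs.prob S else 0) = μs.marg j :=
    fun _ => rfl
  simp only [hm]
  rw [dotProduct]
  refine Finset.sum_congr rfl fun j _ => ?_
  have hmj : μs.marg j ≠ 0 := (μs.margPos j).ne'
  rw [← mul_assoc, mul_inv_cancel₀ hmj, one_mul]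

lemma exp_second' (μs : Sampling d) (L : Matrix (Fin d) (Fin d) ℝ) (g : Fin d → ℝ) :
    ∑ S : Finset (Fin d), μs.prob S * ((μs.sketch S *ᵥ g) ⬝ᵥ (L *ᵥ (μs.sketch S *ᵥ g)))
      = g ⬝ᵥ ((Matrix.hadamard μs.Pbar L) *ᵥ g) := by
  have h : ∀ S : Finset (Fin d), μs.prob S * ((μs.sketch S *ᵥ g) ⬝ᵥ (L *ᵥ (μs.sketch S *ᵥ g)))
      = ∑ j, ∑ l, (if j ∈ S ∧ l ∈ S then μs.prob S else 0) *
          ((μs.marg j)⁻¹ * ((μs.marg l)⁻¹ * (g j * (g l * L j l)))) := by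
    intro S
    have e : (μs.sketch S *ᵥ g) ⬝ᵥ (L *ᵥ (μs.sketch S *ᵥ g))
        = ∑ j, ∑ l, ((if j ∈ S then (μs.marg j)⁻¹ else 0) * g j) *
            (L j l * ((if l ∈ S then (μs.marg l)⁻¹ else 0) * g l)) := by
      have hcf : μs.sketch S *ᵥ g = fun j => (if j ∈ S then (μs.marg j)⁻¹ else 0) * g j := by
        funext j; simp [Sampling.sketch, Matrix.mulVec_diagonal]
      rw [hcf]
      simp only [dotProduct, Matrix.mulVec, Finset.mul_sum]
    rw [e, Finset.mul_sum]
    refine Finset.sum_congr rfl fun j _ => ?_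
    rw [Finset.mul_sum]
    refine Finset.sum_congr rfl fun l _ => ?_
    by_cases hj : j ∈ S <;> by_cases hl : l ∈ S
    · simp only [if_pos hj, if_pos hl, if_pos (show j ∈ S ∧ l ∈ S from ⟨hj, hl⟩)]; ring
    · simp only [if_pos hj, if_neg hl,
        if_neg (show ¬(j ∈ S ∧ l ∈ S) from fun h => hl h.2)]; ring
    · simp only [if_neg hj, if_pos hl,
        if_neg (show ¬(j ∈ S ∧ l ∈ S) from fun h => hj h.1)]; ring
    · simp only [if_neg hj, if_neg hl,
        if_neg (show ¬(j ∈ S ∧ l ∈ S) from fun h => hj h.1)]; ring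
  rw [Finset.sum_congr rfl fun S _ => h S, Finset.sum_comm]
  have h2 : ∀ j : Fin d, (∑ S : Finset (Fin d), ∑ l, (if j ∈ S ∧ l ∈ S then μs.prob S else 0) *
          ((μs.marg j)⁻¹ * ((μs.marg l)⁻¹ * (g j * (g l * L j l)))))
      = ∑ l, μs.probMatrix j l * ((μs.marg j)⁻¹ * ((μs.marg l)⁻¹ * (g j * (g l * L j l)))) := by
    intro j
    rw [Finset.sum_comm]
    refine Finset.sum_congr rfl fun l _ => ?_
    rw [← Finset.sum_mul]
    rfl
  simp only [h2]
  simp only [dotProduct, Matrix.mulVec, Matrix.hadamard, Sampling.Pbar, Matrix.of_apply,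
    div_eq_mul_inv, mul_inv, Finset.mul_sum]
  exact Finset.sum_congr rfl fun j _ => Finset.sum_congr rfl fun l _ => by ring

lemma step_bound' (μsamp : Sampling d) (f : Vec d → ℝ)
    (LL : Matrix (Fin d) (Fin d) ℝ) (hLL : LL.PosSemidef)
    (mu : ℝ) (xstar : Vec d)
    (hcond : ∀ x : Vec d,
      mu * quad LL (x - xstar) + ‖gradient f x‖ ^ 2
        ≤ 2 * ⟪gradient f x, mact LL (x - xstar)⟫)
    (γ : ℝ) (hγ : 0 < γ) (hγ' : γ ≤ 1 / lambdaMax (Matrix.hadamard μsamp.Pbar LL))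
    (x : Vec d) :
    ∑ S : Finset (Fin d), μsamp.prob S *
        quad LL (x - γ • mact (μsamp.sketch S) (gradient f x) - xstar)
      ≤ (1 - γ * mu) * quad LL (x - xstar) := by
  set gv : Fin d → ℝ := fun i => gradient f x i with hgv
  set y : Fin d → ℝ := fun i => x i - xstar i with hy
  have hT : LLᵀ = LL := by
    have h := hLL.1
    rwa [Matrix.IsHermitian, Matrix.conjTranspose_eq_transpose_of_trivial] at h
  have hswap : ∀ a b : Fin d → ℝ, a ⬝ᵥ LL *ᵥ b = b ⬝ᵥ LL *ᵥ a := by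
    intro a b
    calc a ⬝ᵥ LL *ᵥ b = (a ᵥ* LL) ⬝ᵥ b := Matrix.dotProduct_mulVec _ _ _
      _ = (a ᵥ* LLᵀ) ⬝ᵥ b := by rw [hT]
      _ = (LL *ᵥ a) ⬝ᵥ b := by rw [Matrix.vecMul_transpose]
      _ = b ⬝ᵥ LL *ᵥ a := dotProduct_comm _ _
  have hquad : ∀ S : Finset (Fin d),
      quad LL (x - γ • mact (μsamp.sketch S) (gradient f x) - xstar)
        = y ⬝ᵥ LL *ᵥ y - 2 * γ * ((μsamp.sketch S *ᵥ gv) ⬝ᵥ (LL *ᵥ y))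
            + γ ^ 2 * ((μsamp.sketch S *ᵥ gv) ⬝ᵥ (LL *ᵥ (μsamp.sketch S *ᵥ gv))) := by
    intro S
    rw [quad_eq_dot']
    have hz : (fun i => (x - γ • mact (μsamp.sketch S) (gradient f x) - xstar) i)
        = y - γ • (μsamp.sketch S *ᵥ gv) := by
      funext i
      show x i - γ * mact (μsamp.sketch S) (gradient f x) i - xstar i
        = (x i - xstar i) - γ * (μsamp.sketch S *ᵥ gv) i
      have : mact (μsamp.sketch S) (gradient f x) i = (μsamp.sketch S *ᵥ gv) i := rfl
      rw [this]; ring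
    rw [hz]
    set c : Fin d → ℝ := μsamp.sketch S *ᵥ gv with hc
    simp only [Matrix.mulVec_sub, Matrix.mulVec_smul, dotProduct_sub, sub_dotProduct,
      dotProduct_smul, smul_dotProduct, smul_eq_mul]
    rw [hswap y c]
    ring
  have hsum : ∑ S : Finset (Fin d), μsamp.prob S *
        quad LL (x - γ • mact (μsamp.sketch S) (gradient f x) - xstar)
      = y ⬝ᵥ LL *ᵥ y - 2 * γ * (gv ⬝ᵥ LL *ᵥ y)
          + γ ^ 2 * (gv ⬝ᵥ ((Matrix.hadamard μsamp.Pbar LL) *ᵥ gv)) := by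
    have expand : ∀ S : Finset (Fin d), μsamp.prob S *
          quad LL (x - γ • mact (μsamp.sketch S) (gradient f x) - xstar)
        = μsamp.prob S * (y ⬝ᵥ LL *ᵥ y)
            - 2 * γ * (μsamp.prob S * ((μsamp.sketch S *ᵥ gv) ⬝ᵥ (LL *ᵥ y)))
            + γ ^ 2 * (μsamp.prob S * ((μsamp.sketch S *ᵥ gv) ⬝ᵥ
                (LL *ᵥ (μsamp.sketch S *ᵥ gv)))) := fun S => by rw [hquad S]; ring
    rw [Finset.sum_congr rfl fun S _ => expand S, Finset.sum_add_distrib,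
      Finset.sum_sub_distrib, ← Finset.mul_sum, ← Finset.mul_sum, ← Finset.sum_mul,
      μsamp.total, one_mul, exp_unbiased' μsamp gv (LL *ᵥ y), exp_second' μsamp LL gv]
  have hquadx : quad LL (x - xstar) = y ⬝ᵥ LL *ᵥ y := by
    rw [quad_eq_dot']; rfl
  have hcd : mu * (y ⬝ᵥ LL *ᵥ y) + gv ⬝ᵥ gv ≤ 2 * (gv ⬝ᵥ LL *ᵥ y) := by
    have h1 := hcond x
    have e2 : ‖gradient f x‖ ^ 2 = gv ⬝ᵥ gv := by
      rw [← real_inner_self_eq_norm_sq]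
      simp only [PiLp.inner_apply, RCLike.inner_apply, conj_trivial, dotProduct]
      rfl
    have e3 : ⟪gradient f x, mact LL (x - xstar)⟫ = gv ⬝ᵥ LL *ᵥ y := by
      simp only [PiLp.inner_apply, RCLike.inner_apply, conj_trivial, dotProduct]
      refine Finset.sum_congr rfl fun i _ => ?_
      rw [mul_comm]; rfl
    rw [hquadx, e2, e3] at h1
    exact h1
  have hgg : 0 ≤ gv ⬝ᵥ gv := dot_self_nonneg' gv
  have hray := rayleigh_le' (Matrix.hadamard μsamp.Pbar LL) gv
  have hlampos : 0 < lambdaMax (Matrix.hadamard μsamp.Pbar LL) := by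
    by_contra h
    push_neg at h
    have : 1 / lambdaMax (Matrix.hadamard μsamp.Pbar LL) ≤ 0 := one_div_nonpos.mpr h
    linarith
  have hlamle : lambdaMax (Matrix.hadamard μsamp.Pbar LL) ≤ 1 / γ := by
    have h1 : γ * lambdaMax (Matrix.hadamard μsamp.Pbar LL) ≤ 1 := (le_div_iff₀ hlampos).mp hγ'
    rw [le_div_iff₀ hγ]
    linarith
  have hC : gv ⬝ᵥ ((Matrix.hadamard μsamp.Pbar LL) *ᵥ gv) ≤ (1 / γ) * (gv ⬝ᵥ gv) :=
    le_trans hray (mul_le_mul_of_nonneg_right hlamle hgg)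
  have h2 : γ ^ 2 * (gv ⬝ᵥ ((Matrix.hadamard μsamp.Pbar LL) *ᵥ gv)) ≤ γ * (gv ⬝ᵥ gv) := by
    have h3 := mul_le_mul_of_nonneg_left hC (sq_nonneg γ)
    have e : γ ^ 2 * ((1 / γ) * (gv ⬝ᵥ gv)) = γ * (gv ⬝ᵥ gv) := by
      field_simp
    linarith
  have h3 := mul_le_mul_of_nonneg_left hcd hγ.le
  rw [hsum, hquadx]
  nlinarith [h2, h3]

lemma trajExp_le' {V Ω : Type*} [Fintype Ω] (P : Ω → ℝ) (hP : ∀ s, 0 ≤ P s)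
    (x0 : V) (step : V → Ω → V) (φ : V → ℝ) (ρ : ℝ) (hρ : 0 ≤ ρ)
    (hstep : ∀ x, ∑ s : Ω, P s * φ (step x s) ≤ ρ * φ x) :
    ∀ k : ℕ, trajExp P x0 step φ k ≤ ρ ^ k * φ x0 := by
  intro k
  induction k with
  | zero => simp [trajExp, traj]
  | succ k ih =>
    have hdec : trajExp P x0 step φ (k + 1)
        = ∑ ω : Fin k → Ω, (∏ i, P (ω i)) *
            ∑ s : Ω, P s * φ (step (traj x0 step k ω) s) := by
      rw [trajExp, ← Equiv.sum_comp (Fin.snocEquiv fun _ => Ω), Fintype.sum_prod_type,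
        Finset.sum_comm]
      refine Finset.sum_congr rfl fun ω _ => ?_
      rw [Finset.mul_sum]
      refine Finset.sum_congr rfl fun s _ => ?_
      simp only [Fin.snocEquiv_apply, traj, Fin.snoc_castSucc, Fin.snoc_last,
        Fin.prod_univ_castSucc]
      ring
    rw [hdec]
    calc ∑ ω : Fin k → Ω, (∏ i, P (ω i)) * ∑ s : Ω, P s * φ (step (traj x0 step k ω) s)
        ≤ ∑ ω : Fin k → Ω, (∏ i, P (ω i)) * (ρ * φ (traj x0 step k ω)) :=
          Finset.sum_le_sum fun ω _ => mul_le_mul_of_nonneg_left (hstep _)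
            (Finset.prod_nonneg fun i _ => hP _)
      _ = ρ * trajExp P x0 step φ k := by
          rw [trajExp, Finset.mul_sum]
          exact Finset.sum_congr rfl fun ω _ => by ring
      _ ≤ ρ * (ρ ^ k * φ x0) := mul_le_mul_of_nonneg_left ih hρ
      _ = ρ ^ (k + 1) * φ x0 := by ring

end AuxStatement6

/-- SkGD convergence in the weighted norm `‖·‖²_𝐋`. Under the condition
`μ‖x−x*‖²_𝐋 + ‖∇f(x)‖² ≤ 2⟨∇f(x), x−x*⟩_𝐋` and step size `0 < γ ≤ 1/λmax(P̄ ∘ 𝐋)`,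
`γμ ≤ 1`, one has `E[‖x^k − x*‖²_𝐋] ≤ (1 − γμ)^k ‖x^0 − x*‖²_𝐋`. -/


theorem statement6 {d : ℕ} (μsamp : Sampling d) (f : Vec d → ℝ)
    (LL : Matrix (Fin d) (Fin d) ℝ) (hLL : LL.PosSemidef)
    (hdiff : Differentiable ℝ f) (mu : ℝ) (hmu : 0 < mu) (xstar : Vec d)
    (hcond : ∀ x : Vec d,
      mu * quad LL (x - xstar) + ‖gradient f x‖ ^ 2
        ≤ 2 * ⟪gradient f x, mact LL (x - xstar)⟫)
    (γ : ℝ) (hγ : 0 < γ) (hγ' : γ ≤ 1 / lambdaMax (Matrix.hadamard μsamp.Pbar LL))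
    (hγμ : γ * mu ≤ 1) (x0 : Vec d) :
    ∀ k : ℕ,
      trajExp μsamp.prob x0 (fun x S => x - γ • mact (μsamp.sketch S) (gradient f x))
          (fun x => quad LL (x - xstar)) k
        ≤ (1 - γ * mu) ^ k * quad LL (x0 - xstar) := by
  exact trajExp_le' μsamp.prob μsamp.nonneg x0 _ _ (1 - γ * mu) (by linarith)
    (fun x => step_bound' μsamp f LL hLL mu xstar hcond γ hγ hγ' x)
end
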